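/- Let 𝔽 = {f_n : n ∈ ℕ} be a commutative family of continuous self-maps of X (f_i ∘ f_j = f_j ∘ f_i for all i,j). If 𝔽 × 𝔽 is transitive (i.e., the system is weakly mixing), then for every m ≥ 2 the m-fold product 𝔽 × ⋯ × 𝔽 is transitive. -/

import Mathlib

/-- For a commutative family `𝔽 = {f_n : n ∈ ℕ}` of continuous
self-maps, if `𝔽 × 𝔽` is transitive, then every `m`-fold product (`m ≥ 2`)
of `𝔽` with itself is transitive. -/
theorem stmt2 {X : Type*} [MetricSpace X] [CompactSpace X]
    (f : ℕ → X → X) (hfc : ∀ i, Continuous (f i))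
    (hcomm : ∀ i j, f i ∘ f j = f j ∘ f i)
    (ω : ℕ → X → X) (hω0 : ω 0 = id)
    (hω : ∀ k, ω (k + 1) = f (k + 1) ∘ ω k)
    (h2 : ∀ U₁ U₂ V₁ V₂ : Set X, IsOpen U₁ → IsOpen U₂ → IsOpen V₁ → IsOpen V₂ →
      U₁.Nonempty → U₂.Nonempty → V₁.Nonempty → V₂.Nonempty →
      ∃ k : ℕ, 1 ≤ k ∧ (ω k '' U₁ ∩ V₁).Nonempty ∧ (ω k '' U₂ ∩ V₂).Nonempty) :
    ∀ m : ℕ, 2 ≤ m → ∀ U V : Fin m → Set X,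
      (∀ i, IsOpen (U i)) → (∀ i, IsOpen (V i)) →
      (∀ i, (U i).Nonempty) → (∀ i, (V i).Nonempty) →
      ∃ k : ℕ, 1 ≤ k ∧ ∀ i, (ω k '' U i ∩ V i).Nonempty := by
  -- continuity of the compositions ω k
  have hcont : ∀ k, Continuous (ω k) := by
    intro k; induction k with
    | zero => rw [hω0]; exact continuous_id
    | succ k ih => rw [hω k]; exact (hfc (k+1)).comp ih
  -- each f i commutes with each ω k
  have hcf : ∀ i k, f i ∘ ω k = ω k ∘ f i := by
    intro i k; induction k with
    | zero => rw [hω0]; rfl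
    | succ k ih =>
      rw [hω k]
      calc f i ∘ (f (k+1) ∘ ω k) = f (k+1) ∘ (f i ∘ ω k) := by
            rw [← Function.comp_assoc, hcomm, Function.comp_assoc]
        _ = (f (k+1) ∘ ω k) ∘ f i := by rw [ih, Function.comp_assoc]
  -- the ω's commute with each other
  have hωω : ∀ n k, ω n ∘ ω k = ω k ∘ ω n := by
    intro n
    induction n with
    | zero => intro k; rw [hω0]; rfl
    | succ n ih =>
      intro k
      rw [hω n]
      calc (f (n+1) ∘ ω n) ∘ ω k = f (n+1) ∘ (ω k ∘ ω n) := by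
            rw [Function.comp_assoc, ih]
        _ = ω k ∘ (f (n+1) ∘ ω n) := by
            rw [← Function.comp_assoc, hcf, Function.comp_assoc]
  -- the key induction (Furstenberg's argument)
  have key : ∀ m : ℕ, ∀ U V : Fin (m+1) → Set X,
      (∀ i, IsOpen (U i)) → (∀ i, IsOpen (V i)) →
      (∀ i, (U i).Nonempty) → (∀ i, (V i).Nonempty) →
      ∃ n : ℕ, 1 ≤ n ∧ ∀ i, (ω n '' U i ∩ V i).Nonempty := by
    intro m
    induction m with
    | zero =>
      intro U V hUo hVo hUn hVn
      obtain ⟨k, hk, h1, -⟩ := h2 (U 0) (U 0) (V 0) (V 0) (hUo 0) (hUo 0) (hVo 0) (hVo 0)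
        (hUn 0) (hUn 0) (hVn 0) (hVn 0)
      refine ⟨k, hk, fun i => ?_⟩
      have : i = 0 := Fin.fin_one_eq_zero i
      rw [this]; exact h1
    | succ m ih =>
      intro U V hUo hVo hUn hVn
      set a : Fin (m+2) := (Fin.last m).castSucc with ha
      set b : Fin (m+2) := Fin.last (m+1) with hb
      obtain ⟨k, hk1, hx, hy⟩ := h2 (U a) (V a) (U b) (V b) (hUo a) (hVo a) (hUo b) (hVo b)
        (hUn a) (hVn a) (hUn b) (hVn b)
      set A : Fin (m+1) → Set X :=
        Fin.snoc (fun j => U (j.castSucc.castSucc)) (U a ∩ ω k ⁻¹' (U b)) with hA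
      set B : Fin (m+1) → Set X :=
        Fin.snoc (fun j => V (j.castSucc.castSucc)) (V a ∩ ω k ⁻¹' (V b)) with hB
      have hAlast : A (Fin.last m) = U a ∩ ω k ⁻¹' (U b) := by
        rw [hA, Fin.snoc_last]
      have hBlast : B (Fin.last m) = V a ∩ ω k ⁻¹' (V b) := by
        rw [hB, Fin.snoc_last]
      have hAcast : ∀ j : Fin m, A j.castSucc = U (j.castSucc.castSucc) := by
        intro j; rw [hA, Fin.snoc_castSucc]
      have hBcast : ∀ j : Fin m, B j.castSucc = V (j.castSucc.castSucc) := by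
        intro j; rw [hB, Fin.snoc_castSucc]
      have hAo : ∀ j, IsOpen (A j) := by
        refine Fin.lastCases ?_ ?_
        · rw [hAlast]; exact (hUo a).inter ((hUo b).preimage (hcont k))
        · intro j; rw [hAcast]; exact hUo _
      have hBo : ∀ j, IsOpen (B j) := by
        refine Fin.lastCases ?_ ?_
        · rw [hBlast]; exact (hVo a).inter ((hVo b).preimage (hcont k))
        · intro j; rw [hBcast]; exact hVo _
      have hAn : ∀ j, (A j).Nonempty := by
        refine Fin.lastCases ?_ ?_
        · rw [hAlast]
          obtain ⟨y, ⟨x, hxU, rfl⟩, hyb⟩ := hx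
          exact ⟨x, hxU, hyb⟩
        · intro j; rw [hAcast]; exact hUn _
      have hBn : ∀ j, (B j).Nonempty := by
        refine Fin.lastCases ?_ ?_
        · rw [hBlast]
          obtain ⟨y, ⟨x, hxV, rfl⟩, hyb⟩ := hy
          exact ⟨x, hxV, hyb⟩
        · intro j; rw [hBcast]; exact hVn _
      obtain ⟨n, hn1, hn⟩ := ih A B hAo hBo hAn hBn
      refine ⟨n, hn1, ?_⟩
      have hlast := hn (Fin.last m)
      rw [hAlast, hBlast] at hlast
      obtain ⟨y, ⟨x, ⟨hxa, hxb⟩, rfl⟩, hya, hyb⟩ := hlast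
      -- hxa : x ∈ U a, hxb : ω k x ∈ U b, hya : ω n x ∈ V a, hyb : ω k (ω n x) ∈ V b
      refine Fin.lastCases ?_ (Fin.lastCases ?_ ?_) 
      · -- i = b = last (m+1)
        refine ⟨ω n (ω k x), ⟨ω k x, hxb, rfl⟩, ?_⟩
        have hc : ω n (ω k x) = ω k (ω n x) := congrFun (hωω n k) x
        rw [hc]; exact hyb
      · -- i = a = (last m).castSucc
        exact ⟨ω n x, ⟨x, hxa, rfl⟩, hya⟩
      · -- i = j.castSucc.castSucc
        intro j
        have := hn j.castSucc
        rw [hAcast, hBcast] at this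
        exact this
  intro m hm U V hUo hVo hUn hVn
  obtain ⟨m', rfl⟩ : ∃ m', m = m' + 1 := ⟨m - 1, by omega⟩
  exact key m' U V hUo hVo hUn hVn
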